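/- For the Hahn spin chain with β = α+1, the end-to-end correlation at time t = π/2 equals f_{2m+1,0}(π/2) = i(-1)^m sin(πα). Consequently |f_{2m+1,0}(π/2)| = 1 (perfect state transfer) if and only if α is a half-odd-integer, i.e., α ∈ {-1/2, 1/2, 3/2, 5/2, …} (given α > -1). -/

import Mathlib

open Finset Matrix

/-- Pochhammer symbol `(a)_k = a(a+1)⋯(a+k-1)`. -/
noncomputable def poch (a : ℝ) (k : ℕ) : ℝ := ∏ i ∈ Finset.range k, (a + i)

/-- The Hahn polynomial `Q_n(x;α,β,m)` as a terminating ₃F₂ series. -/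
noncomputable def hahnQ (n : ℕ) (x α β : ℝ) (m : ℕ) : ℝ :=
  ∑ k ∈ Finset.range (n + 1),
    poch (-(n : ℝ)) k * poch ((n : ℝ) + α + β + 1) k * poch (-x) k /
      ((k.factorial : ℝ) * poch (α + 1) k * poch (-(m : ℝ)) k)

/-- The Hahn weight `w(x;α,β,m) = C(α+x,x) C(m+β-x,m-x)`. -/
noncomputable def hahnW (x : ℕ) (α β : ℝ) (m : ℕ) : ℝ :=
  (poch (α + 1) x / (x.factorial : ℝ)) * (poch (β + 1) (m - x) / ((m - x).factorial : ℝ))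

/-- The squared norm `h_n(α,β,m)` of the Hahn polynomials. -/
noncomputable def hahnH (n : ℕ) (α β : ℝ) (m : ℕ) : ℝ :=
  ((-1 : ℝ) ^ n * poch ((n : ℝ) + α + β + 1) (m + 1) * poch (β + 1) n * (n.factorial : ℝ)) /
    ((2 * (n : ℝ) + α + β + 1) * poch (α + 1) n * poch (-(m : ℝ)) n * (m.factorial : ℝ))

/-- Orthonormal Hahn function `Q̃_n(x;α,β,m)`. -/
noncomputable def hahnQt (n x : ℕ) (α β : ℝ) (m : ℕ) : ℝ :=
  Real.sqrt (hahnW x α β m) * hahnQ n (x : ℝ) α β m / Real.sqrt (hahnH n α β m)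

/-- The matrix `U` of eigenvectors, built from Hahn polynomials with
parameters `(α,β)` (even rows) and `(α+1,β-1)` (odd rows). -/
noncomputable def hahnU (α β : ℝ) (m : ℕ) : Matrix (Fin (2 * m + 2)) (Fin (2 * m + 2)) ℝ :=
  Matrix.of fun r c =>
    let i : ℕ := (r : ℕ) / 2
    let j : ℕ := if (c : ℕ) ≤ m then m - (c : ℕ) else (c : ℕ) - m - 1
    if (r : ℕ) % 2 = 0 then
      ((-1 : ℝ) ^ i / Real.sqrt 2) * hahnQt j i α β m
    else
      (if (c : ℕ) ≤ m then (-1 : ℝ) else 1) * ((-1 : ℝ) ^ i / Real.sqrt 2)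
        * hahnQt j i (α + 1) (β - 1) m

/-- The spin chain couplings `J_k`. -/
noncomputable def hahnJ (α β : ℝ) (m : ℕ) (k : ℕ) : ℝ :=
  if k % 2 = 1 then Real.sqrt (((k : ℝ) + 1) * ((2 * m + 1 : ℝ) - k))
  else Real.sqrt (((k : ℝ) + 2 * α + 2) * ((2 * m : ℝ) + 2 * β - k))

/-- The tridiagonal single-excitation interaction matrix `M`. -/
noncomputable def hahnM (α β : ℝ) (m : ℕ) : Matrix (Fin (2 * m + 2)) (Fin (2 * m + 2)) ℝ :=
  Matrix.of fun r c =>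
    if (r : ℕ) + 1 = (c : ℕ) then hahnJ α β m r
    else if (c : ℕ) + 1 = (r : ℕ) then hahnJ α β m c
    else 0

/-- The eigenvalues `ε_{m-k} = -2√((α+k+1)(β+k))`, `ε_{m+k+1} = 2√((α+k+1)(β+k))`. -/
noncomputable def hahnEps (α β : ℝ) (m : ℕ) (c : Fin (2 * m + 2)) : ℝ :=
  if (c : ℕ) ≤ m then
    -2 * Real.sqrt ((α + (m - (c : ℕ) : ℕ) + 1) * (β + (m - (c : ℕ) : ℕ)))
  else
    2 * Real.sqrt ((α + ((c : ℕ) - m - 1 : ℕ) + 1) * (β + ((c : ℕ) - m - 1 : ℕ)))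

/-- The correlation function `f_{r,s}(t)`. -/
noncomputable def hahnCorr (α β : ℝ) (m : ℕ) (r s : Fin (2 * m + 2)) (t : ℝ) : ℂ :=
  ∑ j : Fin (2 * m + 2),
    ((hahnU α β m r j * hahnU α β m s j : ℝ) : ℂ)
      * Complex.exp (-Complex.I * t * (hahnEps α β m j : ℝ))


noncomputable def dpoch (a : ℝ) (k : ℕ) : ℝ := ∏ i ∈ Finset.range k, (a - i)

@[simp] lemma poch_zero (a : ℝ) : poch a 0 = 1 := by simp [poch]
lemma poch_succ (a : ℝ) (k : ℕ) : poch a (k+1) = poch a k * (a + k) := by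
  simp [poch, Finset.prod_range_succ]
lemma poch_succ' (a : ℝ) (k : ℕ) : poch a (k+1) = a * poch (a+1) k := by
  rw [poch, Finset.prod_range_succ', poch]
  rw [Finset.prod_congr rfl (fun i _ => (by push_cast; ring : a + (i+1:ℕ) = (a+1) + i))]
  ring

lemma poch_pos {a : ℝ} (h : 0 < a) (k : ℕ) : 0 < poch a k := by
  apply Finset.prod_pos
  intro i _
  positivity

lemma poch_add (a : ℝ) (j k : ℕ) : poch a (j + k) = poch a j * poch (a + j) k := by
  rw [poch, Finset.prod_range_add, poch, poch]
  congr 1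
  apply Finset.prod_congr rfl
  intro i _
  push_cast; ring

lemma dpoch_eq_poch (a : ℝ) (k : ℕ) : dpoch a k = poch (a - k + 1) k := by
  rw [dpoch, ← Finset.prod_range_reflect]
  apply Finset.prod_congr rfl
  intro i hi
  simp only [Finset.mem_range] at hi
  have : (↑(k - 1 - i) : ℝ) = (k : ℝ) - 1 - i := by
    have : i ≤ k - 1 := by omega
    push_cast [Nat.cast_sub this, Nat.cast_sub (by omega : 1 ≤ k)]
    ring
  rw [this]; ring

lemma poch_neg (a : ℝ) (k : ℕ) : poch (-a) k = (-1)^k * dpoch a k := by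
  induction k with
  | zero => simp [poch, dpoch]
  | succ k ih =>
    rw [poch_succ, ih]
    simp [dpoch, Finset.prod_range_succ]
    ring

lemma dpoch_cast {k n : ℕ} (h : k ≤ n) :
    dpoch (n : ℝ) k * ((n - k).factorial : ℝ) = (n.factorial : ℝ) := by
  induction k with
  | zero => simp [dpoch]
  | succ k ih =>
    have hk : k ≤ n := by omega
    have h1 : dpoch (n:ℝ) (k+1) = dpoch (n:ℝ) k * ((n:ℝ) - k) := by
      simp [dpoch, Finset.prod_range_succ]
    have h2 : ((n:ℝ) - k) = ((n - k : ℕ) : ℝ) := by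
      push_cast [Nat.cast_sub hk]; ring
    have h3 : (n - k) = (n - (k+1)) + 1 := by omega
    rw [h1, h2, ih hk |>.symm, h3]
    push_cast [Nat.factorial_succ]
    ring

lemma dpoch_succ (a : ℝ) (k : ℕ) : dpoch a (k+1) = dpoch a k * (a - k) := by
  simp [dpoch, Finset.prod_range_succ]

lemma dpoch_vandermonde (x y : ℝ) (n : ℕ) :
    dpoch (x + y) n = ∑ k ∈ Finset.range (n+1),
      (n.choose k : ℝ) * dpoch x k * dpoch y (n - k) := by
  induction n with
  | zero => simp [dpoch]
  | succ n ih =>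
    have hsplit : ∑ k ∈ Finset.range (n+2),
        ((n+1).choose k : ℝ) * dpoch x k * dpoch y (n+1-k)
        = ∑ k ∈ Finset.range (n+1), (n.choose k : ℝ) *
            (dpoch x (k+1) * dpoch y (n-k) + dpoch x k * dpoch y (n+1-k)) := by
      have e1 : ∑ k ∈ Finset.range (n+2),
          ((n+1).choose k : ℝ) * dpoch x k * dpoch y (n+1-k)
          = (1 : ℝ) * dpoch x 0 * dpoch y (n+1)
            + ∑ k ∈ Finset.range (n+1),
              (((n.choose k : ℝ)) + (n.choose (k+1) : ℝ)) * dpoch x (k+1) * dpoch y (n-k) := by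
        rw [Finset.sum_range_succ' (fun k => ((n+1).choose k : ℝ) * dpoch x k * dpoch y (n+1-k))]
        rw [add_comm]
        congr 1
        · simp
        · apply Finset.sum_congr rfl
          intro k hk
          simp only [Finset.mem_range] at hk
          have h5 : (n+1).choose (k+1) = n.choose k + n.choose (k+1) := Nat.choose_succ_succ n k
          rw [h5]
          push_cast; ring
      have e2 : ∑ k ∈ Finset.range (n+1), (n.choose (k+1) : ℝ) * dpoch x (k+1) * dpoch y (n-k)
          = ∑ k ∈ Finset.range (n+1), (n.choose k : ℝ) * dpoch x k * dpoch y (n+1-k)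
            - (1:ℝ) * dpoch x 0 * dpoch y (n+1) := by
        have : ∑ k ∈ Finset.range (n+2), (n.choose k : ℝ) * dpoch x k * dpoch y (n+1-k)
            = (1:ℝ) * dpoch x 0 * dpoch y (n+1)
              + ∑ k ∈ Finset.range (n+1), (n.choose (k+1) : ℝ) * dpoch x (k+1) * dpoch y (n-k) := by
          rw [Finset.sum_range_succ' (fun k => (n.choose k : ℝ) * dpoch x k * dpoch y (n+1-k))]
          rw [add_comm]
          congr 1
          · simp
          · apply Finset.sum_congr rfl
            intro k hk
            rw [Nat.succ_sub_succ]
        have h2 : ∑ k ∈ Finset.range (n+2), (n.choose k : ℝ) * dpoch x k * dpoch y (n+1-k)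
            = ∑ k ∈ Finset.range (n+1), (n.choose k : ℝ) * dpoch x k * dpoch y (n+1-k) := by
          rw [Finset.sum_range_succ]
          simp [Nat.choose_succ_self]
        rw [h2] at this
        linarith [this]
      have e3 : ∑ k ∈ Finset.range (n+1),
          ((n.choose k : ℝ) + (n.choose (k+1) : ℝ)) * dpoch x (k+1) * dpoch y (n-k)
          = ∑ k ∈ Finset.range (n+1), (n.choose k : ℝ) * dpoch x (k+1) * dpoch y (n-k)
            + ∑ k ∈ Finset.range (n+1), (n.choose (k+1) : ℝ) * dpoch x (k+1) * dpoch y (n-k) := by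
        rw [← Finset.sum_add_distrib]
        apply Finset.sum_congr rfl
        intro k _; ring
      have e4 : ∑ k ∈ Finset.range (n+1), (n.choose k : ℝ) *
          (dpoch x (k+1) * dpoch y (n-k) + dpoch x k * dpoch y (n+1-k))
          = ∑ k ∈ Finset.range (n+1), (n.choose k : ℝ) * dpoch x (k+1) * dpoch y (n-k)
            + ∑ k ∈ Finset.range (n+1), (n.choose k : ℝ) * dpoch x k * dpoch y (n+1-k) := by
        rw [← Finset.sum_add_distrib]
        apply Finset.sum_congr rfl
        intro k _; ring
      rw [e1, e3, e2, e4]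
      ring
    rw [hsplit]
    have hpt : ∀ k ∈ Finset.range (n+1),
        (n.choose k : ℝ) * (dpoch x (k+1) * dpoch y (n-k) + dpoch x k * dpoch y (n+1-k))
        = ((n.choose k : ℝ) * dpoch x k * dpoch y (n-k)) * (x + y - n) := by
      intro k hk
      simp only [Finset.mem_range] at hk
      have hk' : k ≤ n := by omega
      have h1 : n + 1 - k = (n - k) + 1 := by omega
      rw [dpoch_succ, h1, dpoch_succ]
      have : ((n - k : ℕ) : ℝ) = (n : ℝ) - k := by
        push_cast [Nat.cast_sub hk']; ring
      rw [this]
      ring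
    rw [Finset.sum_congr rfl hpt, ← Finset.sum_mul, ← ih, dpoch_succ]

lemma dpoch_nat_choose {k j : ℕ} (h : k ≤ j) :
    dpoch (j : ℝ) k = (j.choose k : ℝ) * (k.factorial : ℝ) := by
  have h1 := dpoch_cast h
  have h2 : (j.choose k) * k.factorial * (j-k).factorial = j.factorial :=
    Nat.choose_mul_factorial_mul_factorial h
  have h3 : ((j-k).factorial : ℝ) ≠ 0 := by positivity
  have h4 : dpoch (j:ℝ) k * ((j-k).factorial : ℝ)
      = ((j.choose k : ℝ) * (k.factorial : ℝ)) * ((j-k).factorial : ℝ) := by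
    rw [h1, ← h2]; push_cast; ring
  exact mul_right_cancel₀ h3 h4

lemma poch_neg_nat {k j : ℕ} (h : k ≤ j) :
    poch (-(j:ℝ)) k = (-1)^k * (j.choose k : ℝ) * (k.factorial : ℝ) := by
  rw [poch_neg, dpoch_nat_choose h]; ring

lemma chu_vandermonde (b c : ℝ) (j : ℕ) (hc : 0 < c) :
    ∑ k ∈ Finset.range (j+1), poch (-(j:ℝ)) k * poch b k / ((k.factorial : ℝ) * poch c k)
      = poch (c - b) j / poch c j := by
  have hcj : poch c j ≠ 0 := (poch_pos hc j).ne'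
  rw [eq_div_iff hcj, Finset.sum_mul]
  have key : ∀ k ∈ Finset.range (j+1),
      poch (-(j:ℝ)) k * poch b k / ((k.factorial : ℝ) * poch c k) * poch c j
      = (j.choose k : ℝ) * dpoch (-b) k * dpoch (c + j - 1) (j - k) := by
    intro k hk
    simp only [Finset.mem_range] at hk
    have hkj : k ≤ j := by omega
    have hsplit : poch c j = poch c k * poch (c + k) (j - k) := by
      rw [← poch_add]
      congr 1
      omega
    have hck : poch c k ≠ 0 := (poch_pos hc k).ne'
    have hkf : (k.factorial : ℝ) ≠ 0 := by positivity
    have hb : poch b k = (-1)^k * dpoch (-b) k := by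
      have := poch_neg (-b) k
      simp only [neg_neg] at this
      rw [this]
    have hcc : poch (c + k) (j - k) = dpoch (c + (j:ℝ) - 1) (j - k) := by
      rw [dpoch_eq_poch]
      congr 1
      have : ((j - k : ℕ) : ℝ) = (j : ℝ) - k := by
        push_cast [Nat.cast_sub hkj]; ring
      rw [this]; ring
    rw [hsplit, poch_neg_nat hkj, hb, hcc]
    field_simp
    have h1 : ((-1:ℝ)^k)^2 = 1 := by rw [← pow_mul, mul_comm, pow_mul, neg_one_sq, one_pow]
    rw [h1]; ring
  rw [Finset.sum_congr rfl key]
  have := dpoch_vandermonde (-b) (c + j - 1) j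
  rw [show -b + (c + (j:ℝ) - 1) = c - b + j - 1 by ring] at this
  rw [← this, dpoch_eq_poch]
  congr 1
  ring

lemma pascal_sum (f : ℕ → ℝ) (n : ℕ) :
    ∑ j ∈ Finset.range (n+2), ((n+1).choose j : ℝ) * f j
      = ∑ j ∈ Finset.range (n+1), (n.choose j : ℝ) * f j
        + ∑ j ∈ Finset.range (n+1), (n.choose j : ℝ) * f (j+1) := by
  rw [Finset.sum_range_succ' (fun j => ((n+1).choose j : ℝ) * f j)]
  have e1 : ∑ j ∈ Finset.range (n+1), ((n+1).choose (j+1) : ℝ) * f (j+1)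
      = ∑ j ∈ Finset.range (n+1), ((n.choose j : ℝ) * f (j+1) + (n.choose (j+1) : ℝ) * f (j+1)) := by
    apply Finset.sum_congr rfl
    intro j _
    rw [Nat.choose_succ_succ]
    push_cast; ring
  rw [e1, Finset.sum_add_distrib]
  have e2 : ∑ j ∈ Finset.range (n+1), (n.choose (j+1) : ℝ) * f (j+1)
      = ∑ j ∈ Finset.range (n+1), (n.choose j : ℝ) * f j - (n.choose 0 : ℝ) * f 0 := by
    have h2 : ∑ j ∈ Finset.range (n+2), (n.choose j : ℝ) * f j
        = ∑ j ∈ Finset.range (n+1), (n.choose (j+1) : ℝ) * f (j+1) + (n.choose 0 : ℝ) * f 0 := by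
      rw [Finset.sum_range_succ' (fun j => (n.choose j : ℝ) * f j)]
    have h3 : ∑ j ∈ Finset.range (n+2), (n.choose j : ℝ) * f j
        = ∑ j ∈ Finset.range (n+1), (n.choose j : ℝ) * f j := by
      rw [Finset.sum_range_succ]
      simp [Nat.choose_succ_self]
    rw [h3] at h2
    linarith
  rw [e2]
  simp only [Nat.choose_zero_right, Nat.cast_one, one_mul, Nat.choose_zero_right]
  ring

lemma poch_partial_fraction {b : ℝ} (hb : 0 < b) (n : ℕ) :
    1 / poch b (n+2) * ((n:ℝ)+1) = 1 / poch b (n+1) - 1 / poch (b+1) (n+1) := by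
  have h1 : poch b (n+2) = b * poch (b+1) (n+1) := poch_succ' b (n+1)
  have h2 : poch b (n+2) = poch b (n+1) * (b + (n+1)) := by
    have := poch_succ b (n+1)
    rw [this]; push_cast; ring
  have p1 : poch b (n+1) ≠ 0 := (poch_pos hb _).ne'
  have p2 : poch (b+1) (n+1) ≠ 0 := (poch_pos (by linarith) _).ne'
  have p3 : poch b (n+2) ≠ 0 := (poch_pos hb _).ne'
  field_simp
  linear_combination poch b (n+1) * h1 - poch (b+1) (n+1) * h2

lemma sum_inv_poch (m : ℕ) : ∀ a : ℝ, 0 < a →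
    ∑ j ∈ Finset.range (m+1), (m.choose j : ℝ) * (1 / poch (a + j) (m+1))
      = 2^m / ∏ i ∈ Finset.range (m+1), (a + 2*i) := by
  induction m with
  | zero =>
    intro a ha
    simp [poch]
  | succ m ih =>
    intro a ha
    have hm1 : ((m:ℝ) + 1) ≠ 0 := by positivity
    have hA : ∀ x : ℝ, 0 < x →
        ∑ j ∈ Finset.range (m+1), (m.choose j : ℝ) * (1 / poch (x + j) (m+2))
        = (∑ j ∈ Finset.range (m+1), (m.choose j : ℝ) * (1 / poch (x + j) (m+1))
          - ∑ j ∈ Finset.range (m+1), (m.choose j : ℝ) * (1 / poch ((x+1) + j) (m+1)))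
            / ((m:ℝ)+1) := by
      intro x hx
      rw [eq_div_iff hm1, Finset.sum_mul, ← Finset.sum_sub_distrib]
      apply Finset.sum_congr rfl
      intro j _
      have hb : (0:ℝ) < x + j := by positivity
      have pf := poch_partial_fraction hb m
      rw [show x + (j:ℝ) + 1 = x + 1 + j from by ring] at pf
      rw [mul_assoc, pf]
      ring
    rw [pascal_sum (fun j => 1 / poch (a + j) (m+2)) m]
    have hshift : ∑ j ∈ Finset.range (m+1), (m.choose j : ℝ) * (1 / poch (a + ((j:ℕ)+1 : ℕ)) (m+2))
        = ∑ j ∈ Finset.range (m+1), (m.choose j : ℝ) * (1 / poch ((a+1) + j) (m+2)) := by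
      apply Finset.sum_congr rfl
      intro j _
      congr 2
      push_cast; ring
    rw [hshift, hA a ha, hA (a+1) (by linarith)]
    rw [show a + 1 + 1 = a + 2 from by ring]
    rw [ih a ha, ih (a+2) (by linarith)]
    have hP1 : ∏ i ∈ Finset.range (m+2), (a + 2*i)
        = (∏ i ∈ Finset.range (m+1), (a + 2*i)) * (a + 2*((m:ℝ)+1)) := by
      rw [Finset.prod_range_succ]
      push_cast; ring
    have hP2 : ∏ i ∈ Finset.range (m+2), (a + 2*i)
        = a * ∏ i ∈ Finset.range (m+1), ((a+2) + 2*i) := by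
      rw [Finset.prod_range_succ' (fun i => (a + 2*(i:ℕ)))]
      rw [Finset.prod_congr rfl (fun i _ => (by push_cast; ring : a + 2*((i:ℕ)+1:ℕ) = (a+2) + 2*i))]
      ring
    have hQ : (0:ℝ) < ∏ i ∈ Finset.range (m+1), (a + 2*i) :=
      Finset.prod_pos (fun i _ => by positivity)
    have hR : (0:ℝ) < ∏ i ∈ Finset.range (m+1), ((a+2) + 2*i) :=
      Finset.prod_pos (fun i _ => by positivity)
    set Q := ∏ i ∈ Finset.range (m+1), (a + 2*i) with hQdef
    set R := ∏ i ∈ Finset.range (m+1), ((a+2) + 2*i) with hRdef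
    have h3 : Q * (a + 2*((m:ℝ)+1)) = a * R := hP1.symm.trans hP2
    rw [hP2]
    field_simp
    linear_combination (-(2:ℝ)^m) * h3


lemma hahnQ_at_zero (n : ℕ) (α β : ℝ) (m : ℕ) : hahnQ n 0 α β m = 1 := by
  rw [hahnQ]
  rw [Finset.sum_eq_single_of_mem 0 (Finset.mem_range.2 (by omega))]
  · simp [poch]
  · intro k _ hk
    obtain ⟨l, rfl⟩ := Nat.exists_eq_succ_of_ne_zero hk
    rw [show (-(0:ℝ)) = 0 from by ring, poch_succ' 0 l]
    simp

lemma hahnQ_at_m {j m : ℕ} (hj : j ≤ m) {α : ℝ} (hα : α > -1) :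
    hahnQ j (m : ℝ) (α+1) α m = (-1)^j * (α+1) / (α + j + 1) := by
  have hc : (0:ℝ) < α + 1 + 1 := by linarith
  have step : ∀ k ∈ Finset.range (j+1),
      poch (-(j:ℝ)) k * poch ((j:ℝ) + (α+1) + α + 1) k * poch (-(m:ℝ)) k /
        ((k.factorial : ℝ) * poch ((α+1) + 1) k * poch (-(m:ℝ)) k)
      = poch (-(j:ℝ)) k * poch ((j:ℝ) + (α+1) + α + 1) k /
        ((k.factorial : ℝ) * poch ((α+1) + 1) k) := by
    intro k hk
    simp only [Finset.mem_range] at hk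
    have hkm : k ≤ m := by omega
    have hz : poch (-(m:ℝ)) k ≠ 0 := by
      rw [poch_neg_nat hkm]
      have h1 : 0 < m.choose k := Nat.choose_pos hkm
      positivity
    rw [mul_div_mul_right _ _ hz]
  rw [hahnQ, Finset.sum_congr rfl step, chu_vandermonde _ _ j hc]
  rw [show (α+1+1) - ((j:ℝ) + (α+1) + α + 1) = -((j:ℝ) + α) from by ring]
  have h1 : poch (-((j:ℝ) + α)) j = (-1)^j * poch (α+1) j := by
    rw [poch_neg, dpoch_eq_poch]
    congr 2
    ring
  have h2 : poch (α+1) j * (α + 1 + j) = (α+1) * poch (α+1+1) j := by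
    rw [← poch_succ, ← poch_succ']
  have hp1 : poch (α+1+1) j ≠ 0 := (poch_pos hc j).ne'
  have hp2 : (0:ℝ) < α + (j:ℝ) + 1 := by
    have := (Nat.cast_nonneg j : (0:ℝ) ≤ j)
    linarith
  rw [h1]
  rw [div_eq_div_iff hp1 hp2.ne']
  rw [show α + 1 + (j:ℝ) = α + j + 1 from by ring] at h2
  linear_combination ((-1:ℝ))^j * h2

lemma hahnW_at_zero (α : ℝ) (m : ℕ) : hahnW 0 α (α+1) m = poch (α+2) m / (m.factorial : ℝ) := by
  simp [hahnW, poch]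
  norm_num [show α + 1 + 1 = α + 2 from by ring]

lemma hahnW_at_m (α : ℝ) (m : ℕ) : hahnW m (α+1) α m = poch (α+2) m / (m.factorial : ℝ) := by
  simp [hahnW, poch]
  norm_num [show α + 1 + 1 = α + 2 from by ring]

lemma hahnH_closed1 {n m : ℕ} (hn : n ≤ m) {α : ℝ} (hα : α > -1) :
    hahnH n α (α+1) m
      = poch ((2*α+2) + (n:ℝ)) (m+1) / (2*(α+1) * (m.choose n : ℝ) * (m.factorial : ℝ)) := by
  have h2 : poch (α+1) n * (α + 1 + n) = (α+1) * poch (α+1+1) n := by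
    rw [← poch_succ, ← poch_succ']
  have hα1 : (0:ℝ) < α + 1 := by linarith
  have hC : (0:ℝ) < (m.choose n : ℝ) := by exact_mod_cast Nat.choose_pos hn
  have hnn : (0:ℝ) ≤ (n:ℝ) := Nat.cast_nonneg n
  have hpa : poch (α+1) n ≠ 0 := (poch_pos hα1 n).ne'
  have hfm : (0:ℝ) < (m.factorial : ℝ) := by positivity
  have hfn : (0:ℝ) < (n.factorial : ℝ) := by positivity
  rw [hahnH, poch_neg_nat hn]
  rw [show (n:ℝ) + α + (α+1) + 1 = (2*α+2) + (n:ℝ) from by ring]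
  rw [div_eq_div_iff (by
      apply mul_ne_zero (mul_ne_zero (mul_ne_zero (by linarith) hpa) _) hfm.ne'
      intro h
      apply absurd h
      have : ((-1:ℝ))^n * (m.choose n : ℝ) * (n.factorial:ℝ) ≠ 0 := by
        apply mul_ne_zero (mul_ne_zero (pow_ne_zero n (by norm_num)) hC.ne') hfn.ne'
      exact this)
    (by positivity)]
  linear_combination (-2 * ((-1:ℝ))^n * poch ((2*α+2) + (n:ℝ)) (m+1) * (n.factorial : ℝ)
    * (m.choose n : ℝ) * (m.factorial : ℝ)) * h2

lemma hahnH_closed2 {n m : ℕ} (hn : n ≤ m) {α : ℝ} (hα : α > -1) :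
    hahnH n (α+1) α m
      = poch ((2*α+2) + (n:ℝ)) (m+1) * (α+1)
        / (2*(α+(n:ℝ)+1)^2 * (m.choose n : ℝ) * (m.factorial : ℝ)) := by
  have h2 : poch (α+1) n * (α + 1 + n) = (α+1) * poch (α+1+1) n := by
    rw [← poch_succ, ← poch_succ']
  have hα1 : (0:ℝ) < α + 1 := by linarith
  have hnn : (0:ℝ) ≤ (n:ℝ) := Nat.cast_nonneg n
  have hS : (0:ℝ) < α + (n:ℝ) + 1 := by linarith
  have hC : (0:ℝ) < (m.choose n : ℝ) := by exact_mod_cast Nat.choose_pos hn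
  have hpa : poch (α+1+1) n ≠ 0 := (poch_pos (by linarith) n).ne'
  have hfm : (0:ℝ) < (m.factorial : ℝ) := by positivity
  have hfn : (0:ℝ) < (n.factorial : ℝ) := by positivity
  rw [hahnH, poch_neg_nat hn]
  rw [show (n:ℝ) + (α+1) + α + 1 = (2*α+2) + (n:ℝ) from by ring]
  rw [show α + 1 + 1 = α + 1 + 1 from rfl]
  rw [div_eq_div_iff (by
      have hq : (2*(n:ℝ) + (α+1) + α + 1) ≠ 0 := by
        intro h; nlinarith
      have h3 : ((-1:ℝ))^n * (m.choose n : ℝ) * (n.factorial:ℝ) ≠ 0 :=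
        mul_ne_zero (mul_ne_zero (pow_ne_zero n (by norm_num)) hC.ne') hfn.ne'
      exact mul_ne_zero (mul_ne_zero (mul_ne_zero hq hpa) h3) hfm.ne')
    (by positivity)]
  linear_combination (2 * ((-1:ℝ))^n * poch ((2*α+2) + (n:ℝ)) (m+1) * (n.factorial : ℝ)
    * (m.choose n : ℝ) * (m.factorial : ℝ) * (α + (n:ℝ) + 1)) * h2

lemma Qt_prod {n m : ℕ} (hn : n ≤ m) {α : ℝ} (hα : α > -1) :
    (-1:ℝ)^n * hahnQt n m (α+1) α m * hahnQt n 0 α (α+1) m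
      = 2*(α+1) * poch (α+2) m * (m.choose n : ℝ)
        / (poch ((2*α+2) + (n:ℝ)) (m+1) ) := by
  have hα1 : (0:ℝ) < α + 1 := by linarith
  have hnn : (0:ℝ) ≤ (n:ℝ) := Nat.cast_nonneg n
  have hS : (0:ℝ) < α + (n:ℝ) + 1 := by linarith
  have hC : (0:ℝ) < (m.choose n : ℝ) := by exact_mod_cast Nat.choose_pos hn
  have hfm : (0:ℝ) < (m.factorial : ℝ) := by positivity
  have hP : (0:ℝ) < poch ((2*α+2) + (n:ℝ)) (m+1) := poch_pos (by linarith) _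
  have hW : (0:ℝ) < poch (α+2) m / (m.factorial : ℝ) :=
    div_pos (poch_pos (by linarith) m) hfm
  rw [hahnQt, hahnQt, hahnW_at_m, hahnW_at_zero, Nat.cast_zero, hahnQ_at_zero,
    hahnQ_at_m hn hα, hahnH_closed1 hn hα, hahnH_closed2 hn hα]
  set W := poch (α+2) m / (m.factorial : ℝ) with hWdef
  set P := poch ((2*α+2) + (n:ℝ)) (m+1) with hPdef
  have hsq : Real.sqrt (P * (α+1) / (2*(α+(n:ℝ)+1)^2 * (m.choose n : ℝ) * (m.factorial : ℝ)))
      * Real.sqrt (P / (2*(α+1) * (m.choose n : ℝ) * (m.factorial : ℝ)))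
      = P / (2*(α+(n:ℝ)+1) * (m.choose n : ℝ) * (m.factorial : ℝ)) := by
    rw [← Real.sqrt_mul (by positivity)]
    rw [show P * (α+1) / (2*(α+(n:ℝ)+1)^2 * (m.choose n : ℝ) * (m.factorial : ℝ))
        * (P / (2*(α+1) * (m.choose n : ℝ) * (m.factorial : ℝ)))
        = (P / (2*(α+(n:ℝ)+1) * (m.choose n : ℝ) * (m.factorial : ℝ)))^2 from by
      field_simp]
    exact Real.sqrt_sq (by positivity)
  rw [show (-1:ℝ)^n * (Real.sqrt W * ((-1:ℝ)^n * (α+1) / (α + (n:ℝ) + 1))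
        / Real.sqrt (P * (α+1) / (2*(α+(n:ℝ)+1)^2 * (m.choose n : ℝ) * (m.factorial : ℝ))))
        * (Real.sqrt W * 1 / Real.sqrt (P / (2*(α+1) * (m.choose n : ℝ) * (m.factorial : ℝ))))
      = ((-1:ℝ)^n * ((-1:ℝ)^n * (α+1) / (α + (n:ℝ) + 1)) * (Real.sqrt W * Real.sqrt W))
        / (Real.sqrt (P * (α+1) / (2*(α+(n:ℝ)+1)^2 * (m.choose n : ℝ) * (m.factorial : ℝ)))
           * Real.sqrt (P / (2*(α+1) * (m.choose n : ℝ) * (m.factorial : ℝ)))) from by ring]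
  rw [hsq, Real.mul_self_sqrt hW.le, hWdef]
  have hone : ((-1:ℝ))^n * (-1:ℝ)^n = 1 := by
    rw [← pow_add, ← two_mul, pow_mul]; norm_num
  rw [show (-1:ℝ)^n * ((-1:ℝ)^n * (α+1) / (α + (n:ℝ) + 1)) * (poch (α+2) m / (m.factorial:ℝ))
      = ((-1:ℝ)^n * (-1:ℝ)^n) * ((α+1) / (α + (n:ℝ) + 1) * (poch (α+2) m / (m.factorial:ℝ)))
      from by ring, hone, one_mul]
  field_simp

lemma key_sum (m : ℕ) {α : ℝ} (hα : α > -1) :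
    ∑ n ∈ Finset.range (m+1), (-1:ℝ)^n * hahnQt n m (α+1) α m * hahnQt n 0 α (α+1) m = 1 := by
  have hα1 : (0:ℝ) < α + 1 := by linarith
  have step : ∀ n ∈ Finset.range (m+1),
      (-1:ℝ)^n * hahnQt n m (α+1) α m * hahnQt n 0 α (α+1) m
      = (2*(α+1) * poch (α+2) m) * ((m.choose n : ℝ) * (1 / poch ((2*α+2) + (n:ℝ)) (m+1))) := by
    intro n hn
    simp only [Finset.mem_range] at hn
    rw [Qt_prod (by omega) hα]
    ring
  rw [Finset.sum_congr rfl step, ← Finset.mul_sum, sum_inv_poch m (2*α+2) (by linarith)]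
  have hprod : ∏ i ∈ Finset.range (m+1), (2*α+2 + 2*(i:ℝ))
      = 2^(m+1) * ((α+1) * poch (α+2) m) := by
    calc ∏ i ∈ Finset.range (m+1), (2*α+2 + 2*(i:ℝ))
        = ∏ i ∈ Finset.range (m+1), (2 * ((α+1) + (i:ℝ))) :=
          Finset.prod_congr rfl (fun i _ => by push_cast; ring)
      _ = 2^(m+1) * poch (α+1) (m+1) := by
          rw [Finset.prod_mul_distrib, Finset.prod_const, Finset.card_range]; rfl
      _ = 2^(m+1) * ((α+1) * poch (α+2) m) := by
          rw [poch_succ', show α + 1 + 1 = α + 2 from by ring]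
  rw [hprod]
  have h1 : poch (α+2) m ≠ 0 := (poch_pos (by linarith) m).ne'
  have h2 : (2:ℝ)^(m+1) ≠ 0 := by positivity
  field_simp
  ring

lemma fin_sum_pair (m : ℕ) (f : Fin (2*m+2) → ℂ) (F : ℕ → ℂ)
    (hF : ∀ c : Fin (2*m+2), f c = F (c : ℕ)) :
    ∑ c, f c = ∑ j ∈ Finset.range (m+1), (F (m-j) + F (m+1+j)) := by
  have h0 : ∑ c, f c = ∑ c ∈ Finset.range (2*m+2), F c := by
    rw [← Fin.sum_univ_eq_sum_range F]
    exact Finset.sum_congr rfl (fun c _ => hF c)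
  rw [h0, show 2*m+2 = (m+1)+(m+1) from by ring, Finset.sum_range_add]
  rw [← Finset.sum_range_reflect (fun j => F j) (m+1)]
  rw [← Finset.sum_add_distrib]
  apply Finset.sum_congr rfl
  intro j hj
  simp only [Finset.mem_range] at hj
  congr 2

theorem hahn_perfect_state_transfer_half_period
    (m : ℕ) (α β : ℝ) (hα : α > -1) (hβ : β = α + 1) :
    hahnCorr α β m ⟨2 * m + 1, by omega⟩ ⟨0, by omega⟩ (Real.pi / 2)
      = Complex.I * (-1 : ℂ) ^ m * (Real.sin (Real.pi * α) : ℝ) ∧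
    (‖hahnCorr α β m ⟨2 * m + 1, by omega⟩ ⟨0, by omega⟩ (Real.pi / 2)‖ = 1
      ↔ ∃ l : ℕ, α = (l : ℝ) - 1 / 2) := by
  subst hβ
  have hα1 : (0:ℝ) < α + 1 := by linarith
  have main : hahnCorr α (α+1) m ⟨2 * m + 1, by omega⟩ ⟨0, by omega⟩ (Real.pi / 2)
      = Complex.I * (-1 : ℂ) ^ m * ((Real.sin (Real.pi * α) : ℝ) : ℂ) := by
    rw [hahnCorr]
    set F : ℕ → ℂ := fun c =>
      ((((if c ≤ m then (-1:ℝ) else 1) * ((-1:ℝ)^((2*m+1)/2) / Real.sqrt 2)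
            * hahnQt (if c ≤ m then m - c else c - m - 1) ((2*m+1)/2) (α+1) (α+1-1) m)
          * (((-1:ℝ)^(0/2) / Real.sqrt 2)
            * hahnQt (if c ≤ m then m - c else c - m - 1) (0/2) α (α+1) m) : ℝ) : ℂ)
        * Complex.exp (-Complex.I * ((Real.pi/2 : ℝ) : ℂ) *
            (((if c ≤ m then
                -2 * Real.sqrt ((α + ((m - c : ℕ):ℝ) + 1) * ((α+1) + ((m - c : ℕ):ℝ)))
              else
                2 * Real.sqrt ((α + ((c - m - 1 : ℕ):ℝ) + 1) * ((α+1) + ((c - m - 1 : ℕ):ℝ)))) : ℝ) : ℂ))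
      with hFdef
    rw [fin_sum_pair m _ F ?hF]
    case hF =>
      intro c
      simp only [hFdef, hahnU, hahnEps, Matrix.of_apply]
      rw [if_neg (by omega : ¬((2*m+1) % 2 = 0)), if_pos trivial]
    have pair : ∀ j ∈ Finset.range (m+1), F (m-j) + F (m+1+j)
        = (Complex.I * (-1:ℂ)^m * ((Real.sin (Real.pi * α) : ℝ) : ℂ))
          * (((-1:ℝ)^j * hahnQt j m (α+1) α m * hahnQt j 0 α (α+1) m : ℝ) : ℂ) := by
      intro j hj
      simp only [Finset.mem_range] at hj
      have e0 : (2*m+1)/2 = m := by omega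
      have e1 : m - (m - j) = j := by omega
      have e2 : m + 1 + j - m - 1 = j := by omega
      have hT1 : m - j ≤ m := by omega
      have hT2 : ¬ (m + 1 + j ≤ m) := by omega
      have hjr : (0:ℝ) ≤ (j:ℝ) := Nat.cast_nonneg j
      simp only [hFdef, if_pos hT1, if_neg hT2, e0, e1, e2, Nat.zero_div, pow_zero,
        show α + 1 - 1 = α from by ring]
      have hs : Real.sqrt ((α + (j:ℝ) + 1) * (α + 1 + (j:ℝ))) = α + (j:ℝ) + 1 := by
        rw [show (α + (j:ℝ) + 1) * (α + 1 + (j:ℝ)) = (α + (j:ℝ) + 1)^2 from by ring]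
        exact Real.sqrt_sq (by linarith)
      rw [hs]
      have hx1 : -Complex.I * ((Real.pi/2 : ℝ):ℂ) * ((-2 * (α + (j:ℝ) + 1) : ℝ):ℂ)
          = ((Real.pi * (α + (j:ℝ) + 1) : ℝ) : ℂ) * Complex.I := by push_cast; ring
      have hx2 : -Complex.I * ((Real.pi/2 : ℝ):ℂ) * ((2 * (α + (j:ℝ) + 1) : ℝ):ℂ)
          = ((-(Real.pi * (α + (j:ℝ) + 1)) : ℝ) : ℂ) * Complex.I := by push_cast; ring
      rw [hx1, hx2, Complex.exp_mul_I, Complex.exp_mul_I]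
      rw [← Complex.ofReal_cos, ← Complex.ofReal_sin, ← Complex.ofReal_cos,
        ← Complex.ofReal_sin, Real.cos_neg, Real.sin_neg]
      have hsin : Real.sin (Real.pi * (α + (j:ℝ) + 1))
          = (-1:ℝ)^(j+1) * Real.sin (Real.pi * α) := by
        rw [show Real.pi * (α + (j:ℝ) + 1)
            = Real.pi * α + ((j+1 : ℕ):ℝ) * Real.pi from by push_cast; ring]
        exact Real.sin_add_nat_mul_pi _ _
      rw [hsin]
      have h2 : Real.sqrt 2 * Real.sqrt 2 = 2 := Real.mul_self_sqrt (by norm_num)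
      have h2ne : Real.sqrt 2 ≠ 0 := by positivity
      set Q' := hahnQt j m (α+1) α m
      set Q := hahnQt j 0 α (α+1) m
      have hA : (-1:ℝ) * ((-1:ℝ)^m/Real.sqrt 2) * Q' * (1/Real.sqrt 2 * Q)
          = -(1/2) * ((-1:ℝ)^m * Q' * Q) := by
        field_simp
        rw [Real.sq_sqrt (by norm_num)]; ring
      have hB : (1:ℝ) * ((-1:ℝ)^m/Real.sqrt 2) * Q' * (1/Real.sqrt 2 * Q)
          = (1/2) * ((-1:ℝ)^m * Q' * Q) := by
        field_simp
        rw [Real.sq_sqrt (by norm_num)]; ring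
      rw [hA, hB]
      push_cast
      ring
    rw [Finset.sum_congr rfl pair, ← Finset.mul_sum]
    rw [show (∑ j ∈ Finset.range (m+1),
        (((-1:ℝ)^j * hahnQt j m (α+1) α m * hahnQt j 0 α (α+1) m : ℝ) : ℂ))
        = ((∑ j ∈ Finset.range (m+1),
            ((-1:ℝ)^j * hahnQt j m (α+1) α m * hahnQt j 0 α (α+1) m) : ℝ) : ℂ) from
      (Complex.ofReal_sum _ _).symm]
    rw [key_sum m hα, Complex.ofReal_one, mul_one]
  refine ⟨main, ?_⟩
  rw [main]
  have habs : ‖Complex.I * (-1:ℂ)^m * ((Real.sin (Real.pi * α) : ℝ) : ℂ)‖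
      = |Real.sin (Real.pi * α)| := by
    rw [norm_mul, norm_mul, norm_pow, Complex.norm_I, Complex.norm_real]
    norm_num
  rw [habs]
  constructor
  · intro h
    have h2 : Real.sin (Real.pi*α)^2 = 1 := by
      rw [← sq_abs, h]; norm_num
    have hcos : Real.cos (Real.pi*α) = 0 := by
      have h1 := Real.sin_sq_add_cos_sq (Real.pi*α)
      nlinarith [sq_nonneg (Real.cos (Real.pi*α))]
    obtain ⟨k, hk⟩ := Real.cos_eq_zero_iff.mp hcos
    have hπ : Real.pi ≠ 0 := Real.pi_ne_zero
    have hαk : α = (k:ℝ) + 1/2 := by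
      have h3 : Real.pi * (α - ((k:ℝ) + 1/2)) = 0 := by rw [mul_sub, hk]; ring
      rcases mul_eq_zero.mp h3 with h4 | h4
      · exact absurd h4 hπ
      · linarith
    have hk1 : (0:ℤ) ≤ k + 1 := by
      by_contra hcon
      push_neg at hcon
      have : (k:ℝ) ≤ -2 := by exact_mod_cast (by omega : k ≤ -2)
      linarith
    refine ⟨(k+1).toNat, ?_⟩
    have : (((k+1).toNat : ℕ) : ℝ) = (k:ℝ) + 1 := by
      exact_mod_cast congrArg (Int.cast : ℤ → ℝ) (Int.toNat_of_nonneg hk1)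
    rw [this]; linarith
  · rintro ⟨l, rfl⟩
    rw [show Real.pi * ((l:ℝ) - 1/2) = -(Real.pi/2) + (l:ℝ)*Real.pi from by ring]
    rw [Real.sin_add_nat_mul_pi, Real.sin_neg, Real.sin_pi_div_two]
    simp [abs_mul]
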